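/- Let α, β ∈ MvPolynomial (Fin n) ℤ be nonzero. Then E_wcr,⊥ ⊢ α* · β* = (α·β)*; in particular, the product of two nonzero polynomial sumterms is provably equal, from E_wcr,⊥, to a polynomial sumterm. -/

import Mathlib

universe u

/-- Ring-with-`⊥` terms in `n` variables: variables, constants `0`, `1` and `⊥`,
negation, addition and multiplication.  Terms avoiding the constructor `bot`
are the ring terms. -/
inductive RTerm (n : ℕ) : Type where
  | var : Fin n → RTerm n
  | zero : RTerm n
  | one : RTerm n
  | bot : RTerm n
  | neg : RTerm n → RTerm n
  | add : RTerm n → RTerm n → RTerm n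
  | mul : RTerm n → RTerm n → RTerm n

namespace RTerm

/-- Addition on the `⊥`-enlargement `Option R` of a commutative ring `R`. -/
def bAdd {R : Type u} [CommRing R] : Option R → Option R → Option R
  | some a, some b => some (a + b)
  | _, _ => none

/-- Multiplication on the `⊥`-enlargement `Option R` of a commutative ring `R`. -/
def bMul {R : Type u} [CommRing R] : Option R → Option R → Option R
  | some a, some b => some (a * b)
  | _, _ => none

/-- Negation on the `⊥`-enlargement `Option R` of a commutative ring `R`. -/
def bNeg {R : Type u} [CommRing R] : Option R → Option R
  | some a => some (-a)
  | none => none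

/-- Evaluation of a ring-with-`⊥` term in the `⊥`-enlargement `Option R` of a
commutative ring `R`, under a valuation `σ : Fin n → Option R`. -/
def evalB {n : ℕ} {R : Type u} [CommRing R] (σ : Fin n → Option R) :
    RTerm n → Option R
  | var i => σ i
  | zero => some 0
  | one => some 1
  | bot => none
  | neg t => bNeg (t.evalB σ)
  | add t s => bAdd (t.evalB σ) (s.evalB σ)
  | mul t s => bMul (t.evalB σ) (s.evalB σ)

/-- Derivability in equational logic from the axioms `E_wcr,⊥`: the least relation
containing all substitution instances of the eleven axioms that is reflexive,
symmetric, transitive and closed under the term-forming operations. -/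
inductive DerivWcr {n : ℕ} : RTerm n → RTerm n → Prop
  | add_assoc (x y z : RTerm n) : DerivWcr ((x.add y).add z) (x.add (y.add z))
  | add_comm (x y : RTerm n) : DerivWcr (x.add y) (y.add x)
  | add_zero (x : RTerm n) : DerivWcr (x.add zero) x
  | add_neg (x : RTerm n) : DerivWcr (x.add x.neg) (zero.mul x)
  | mul_assoc (x y z : RTerm n) : DerivWcr (x.mul (y.mul z)) ((x.mul y).mul z)
  | mul_comm (x y : RTerm n) : DerivWcr (x.mul y) (y.mul x)
  | one_mul (x : RTerm n) : DerivWcr (one.mul x) x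
  | mul_add (x y z : RTerm n) : DerivWcr (x.mul (y.add z)) ((x.mul y).add (x.mul z))
  | neg_neg (x : RTerm n) : DerivWcr x.neg.neg x
  | zero_mul_add (x y : RTerm n) : DerivWcr (zero.mul (x.add y)) (zero.mul (x.mul y))
  | add_bot (x : RTerm n) : DerivWcr (x.add bot) bot
  | refl (x : RTerm n) : DerivWcr x x
  | symm {x y : RTerm n} : DerivWcr x y → DerivWcr y x
  | trans {x y z : RTerm n} : DerivWcr x y → DerivWcr y z → DerivWcr x z
  | neg_congr {x y : RTerm n} : DerivWcr x y → DerivWcr x.neg y.neg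
  | add_congr {x x' y y' : RTerm n} :
      DerivWcr x x' → DerivWcr y y' → DerivWcr (x.add y) (x'.add y')
  | mul_congr {x x' y y' : RTerm n} :
      DerivWcr x x' → DerivWcr y y' → DerivWcr (x.mul y) (x'.mul y')

/-- Term powers: `pow t 0 = 1`, `pow t 1 = t`, `pow t (k+1) = pow t k · t`. -/
def pow {n : ℕ} (t : RTerm n) : ℕ → RTerm n
  | 0 => one
  | 1 => t
  | k + 2 => (t.pow (k + 1)).mul t

/-- Numerals for natural numbers: `0`, `1`, `n+1 = n + 1`. -/
def natNumeral (n : ℕ) : ℕ → RTerm n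
  | 0 => zero
  | 1 => one
  | k + 2 => (natNumeral n (k + 1)).add one

/-- Numerals for integers, built from `0`, `1`, `+` and negation. -/
def intNumeral (n : ℕ) (c : ℤ) : RTerm n :=
  if 0 ≤ c then natNumeral n c.toNat else (natNumeral n (-c).toNat).neg

/-- The term `x₁^{d₁} ⋯ xₙ^{dₙ}` representing a monomial `d`. -/
def monTerm {n : ℕ} (d : Fin n →₀ ℕ) : RTerm n :=
  ((List.finRange n).map fun i => (var i).pow (d i)).foldr mul one

/-- `polyTerm α` is the canonical ring term `α*` representing the integer
multivariate polynomial `α`: the sum, over the monomials in the support of `α`,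
of the numeral of the coefficient times the product of the variables raised to
their powers (and `0* = 0`). -/
noncomputable def polyTerm {n : ℕ} (α : MvPolynomial (Fin n) ℤ) : RTerm n :=
  (α.support.toList.map fun d => (intNumeral n (α.coeff d)).mul (monTerm d)).foldr add zero

end RTerm
namespace RTerm

variable {n : ℕ}

open DerivWcr

local infix:50 " ≋ " => DerivWcr

instance : Trans (DerivWcr (n := n)) (DerivWcr (n := n)) (DerivWcr (n := n)) :=
  ⟨DerivWcr.trans⟩

theorem d_zero_add (x : RTerm n) : DerivWcr (zero.add x) x :=
  (DerivWcr.add_comm _ _).trans (DerivWcr.add_zero x)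

theorem d_mul_one (x : RTerm n) : DerivWcr (x.mul one) x :=
  (DerivWcr.mul_comm _ _).trans (DerivWcr.one_mul x)

theorem d_add_mul (x y z : RTerm n) :
    DerivWcr ((x.add y).mul z) ((x.mul z).add (y.mul z)) :=
  (DerivWcr.mul_comm _ _).trans ((DerivWcr.mul_add _ _ _).trans
    (DerivWcr.add_congr (DerivWcr.mul_comm _ _) (DerivWcr.mul_comm _ _)))

theorem d_add_zmul_self (x : RTerm n) : DerivWcr (x.add (zero.mul x)) x :=
  (DerivWcr.add_congr (d_mul_one x).symm (DerivWcr.mul_comm zero x)).trans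
    ((DerivWcr.mul_add x one zero).symm.trans
      ((DerivWcr.mul_congr (DerivWcr.refl x) (DerivWcr.add_zero one)).trans (d_mul_one x)))

theorem d_zmul_zero : DerivWcr ((zero : RTerm n).mul zero) zero :=
  (d_zero_add _).symm.trans (d_add_zmul_self zero)

theorem d_zmul_one : DerivWcr ((zero : RTerm n).mul one) zero :=
  (DerivWcr.mul_comm _ _).trans (DerivWcr.one_mul zero)

theorem d_zmul_mul (x y : RTerm n) :
    DerivWcr (zero.mul (x.mul y)) ((zero.mul x).add (zero.mul y)) :=
  (DerivWcr.zero_mul_add x y).symm.trans (DerivWcr.mul_add _ _ _)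

theorem d_zmul_neg (x : RTerm n) : DerivWcr (zero.mul x.neg) (zero.mul x) :=
  (DerivWcr.add_neg x.neg).symm.trans ((DerivWcr.add_congr (DerivWcr.refl _) (DerivWcr.neg_neg x)).trans
    ((DerivWcr.add_comm _ _).trans (DerivWcr.add_neg x)))

theorem d_zmul_zmul (x : RTerm n) :
    DerivWcr (zero.mul (zero.mul x)) (zero.mul x) :=
  (d_zmul_mul _ _).trans ((DerivWcr.add_congr d_zmul_zero (DerivWcr.refl _)).trans (d_zero_add _))

theorem d_zmul_idem (x : RTerm n) :
    DerivWcr ((zero.mul x).add (zero.mul x)) (zero.mul x) :=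
  (DerivWcr.add_congr (DerivWcr.refl _) (d_zmul_zmul x).symm).trans (d_add_zmul_self _)

theorem d_add_left_comm (x y z : RTerm n) :
    DerivWcr (x.add (y.add z)) (y.add (x.add z)) :=
  (DerivWcr.add_assoc x y z).symm.trans ((DerivWcr.add_congr (DerivWcr.add_comm x y) (DerivWcr.refl z)).trans
    (DerivWcr.add_assoc y x z))

theorem d_add_right_comm (x y z : RTerm n) :
    DerivWcr ((x.add y).add z) ((x.add z).add y) :=
  (DerivWcr.add_assoc x y z).trans ((DerivWcr.add_congr (DerivWcr.refl x) (DerivWcr.add_comm y z)).trans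
    (DerivWcr.add_assoc x z y).symm)

theorem d_add_add_add (a b c d : RTerm n) :
    DerivWcr ((a.add b).add (c.add d)) ((a.add c).add (b.add d)) :=
  (DerivWcr.add_assoc a b (c.add d)).trans ((DerivWcr.add_congr (DerivWcr.refl a)
    (d_add_left_comm b c d)).trans (DerivWcr.add_assoc a c (b.add d)).symm)

theorem d_mul_left_comm (x y z : RTerm n) :
    DerivWcr (x.mul (y.mul z)) (y.mul (x.mul z)) :=
  (DerivWcr.mul_assoc x y z).trans ((DerivWcr.mul_congr (DerivWcr.mul_comm x y) (DerivWcr.refl z)).trans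
    (DerivWcr.mul_assoc y x z).symm)

theorem d_mul_mul_mul (a b c d : RTerm n) :
    DerivWcr ((a.mul b).mul (c.mul d)) ((a.mul c).mul (b.mul d)) :=
  (DerivWcr.mul_assoc a b (c.mul d)).symm.trans ((DerivWcr.mul_congr (DerivWcr.refl a)
    (d_mul_left_comm b c d)).trans (DerivWcr.mul_assoc a c (b.mul d)))

theorem d_neg_mul (x y : RTerm n) :
    DerivWcr (x.neg.mul y) (x.mul y).neg := by
  have h2 : DerivWcr (zero.mul (x.neg.mul y))
      ((x.mul y).add (x.mul y).neg) :=
    (d_zmul_mul _ _).trans ((DerivWcr.add_congr (d_zmul_neg x) (DerivWcr.refl _)).trans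
      ((d_zmul_mul x y).symm.trans (DerivWcr.add_neg (x.mul y)).symm))
  have h5 : DerivWcr ((x.neg.mul y).add (x.mul y)) (zero.mul (x.mul y)) :=
    (d_add_mul x.neg x y).symm.trans
      ((DerivWcr.mul_congr ((DerivWcr.add_comm x.neg x).trans (DerivWcr.add_neg x)) (DerivWcr.refl y)).trans
        (DerivWcr.mul_assoc zero x y).symm)
  calc x.neg.mul y
      ≋ (x.neg.mul y).add (zero.mul (x.neg.mul y)) := (d_add_zmul_self _).symm
    _ ≋ (x.neg.mul y).add ((x.mul y).add (x.mul y).neg) := DerivWcr.add_congr (DerivWcr.refl _) h2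
    _ ≋ ((x.neg.mul y).add (x.mul y)).add (x.mul y).neg := (DerivWcr.add_assoc _ _ _).symm
    _ ≋ (zero.mul (x.mul y)).add (x.mul y).neg := DerivWcr.add_congr h5 (DerivWcr.refl _)
    _ ≋ (x.mul y).neg.add (zero.mul (x.mul y)) := DerivWcr.add_comm _ _
    _ ≋ (x.mul y).neg.add (zero.mul (x.mul y).neg) :=
        DerivWcr.add_congr (DerivWcr.refl _) (d_zmul_neg (x.mul y)).symm
    _ ≋ (x.mul y).neg := d_add_zmul_self _

theorem d_mul_neg (x y : RTerm n) :
    DerivWcr (x.mul y.neg) (x.mul y).neg :=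
  (DerivWcr.mul_comm _ _).trans ((d_neg_mul _ _).trans (DerivWcr.neg_congr (DerivWcr.mul_comm _ _)))

theorem d_neg_one_mul (x : RTerm n) : DerivWcr (one.neg.mul x) x.neg :=
  (d_neg_mul _ _).trans (DerivWcr.neg_congr (DerivWcr.one_mul x))

theorem d_neg_add (x y : RTerm n) :
    DerivWcr ((x.add y).neg) (x.neg.add y.neg) :=
  (d_neg_one_mul _).symm.trans ((DerivWcr.mul_add _ _ _).trans
    (DerivWcr.add_congr (d_neg_one_mul x) (d_neg_one_mul y)))

theorem d_neg_zero : DerivWcr ((zero : RTerm n).neg) zero :=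
  (d_zero_add _).symm.trans ((DerivWcr.add_neg zero).trans d_zmul_zero)

/-- Variables occurring in a term. -/
def tvars : RTerm n → Finset (Fin n)
  | .var i => {i}
  | .zero => ∅
  | .one => ∅
  | .bot => ∅
  | .neg t => tvars t
  | .add t s => tvars t ∪ tvars s
  | .mul t s => tvars t ∪ tvars s

/-- Terms avoiding `⊥`. -/
def IsPure : RTerm n → Prop
  | .var _ => True
  | .zero => True
  | .one => True
  | .bot => False
  | .neg t => IsPure t
  | .add t s => IsPure t ∧ IsPure s
  | .mul t s => IsPure t ∧ IsPure s

@[simp] theorem tvars_var (i : Fin n) : tvars (var i) = {i} := rfl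
@[simp] theorem tvars_zero : tvars (zero : RTerm n) = ∅ := rfl
@[simp] theorem tvars_one : tvars (one : RTerm n) = ∅ := rfl
@[simp] theorem tvars_bot : tvars (bot : RTerm n) = ∅ := rfl
@[simp] theorem tvars_neg (t : RTerm n) : tvars t.neg = tvars t := rfl
@[simp] theorem tvars_add (t s : RTerm n) : tvars (t.add s) = tvars t ∪ tvars s := rfl
@[simp] theorem tvars_mul (t s : RTerm n) : tvars (t.mul s) = tvars t ∪ tvars s := rfl

@[simp] theorem isPure_var (i : Fin n) : IsPure (var i) ↔ True := Iff.rfl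
@[simp] theorem isPure_zero : IsPure (zero : RTerm n) ↔ True := Iff.rfl
@[simp] theorem isPure_one : IsPure (one : RTerm n) ↔ True := Iff.rfl
@[simp] theorem isPure_bot : IsPure (bot : RTerm n) ↔ False := Iff.rfl
@[simp] theorem isPure_neg (t : RTerm n) : IsPure t.neg ↔ IsPure t := Iff.rfl
@[simp] theorem isPure_add (t s : RTerm n) : IsPure (t.add s) ↔ IsPure t ∧ IsPure s := Iff.rfl
@[simp] theorem isPure_mul (t s : RTerm n) : IsPure (t.mul s) ↔ IsPure t ∧ IsPure s := Iff.rfl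

theorem d_zvar (s : RTerm n) (i : Fin n) (h : i ∈ tvars s) :
    DerivWcr ((zero.mul s).add (zero.mul (var i))) (zero.mul s) := by
  induction s with
  | var j =>
      simp only [tvars_var, Finset.mem_singleton] at h
      subst h; exact d_zmul_idem _
  | zero => simp at h
  | one => simp at h
  | bot => simp at h
  | neg t ih =>
      exact (DerivWcr.add_congr (d_zmul_neg t) (DerivWcr.refl _)).trans
        ((ih h).trans (d_zmul_neg t).symm)
  | add a b iha ihb =>
      simp only [tvars_add, Finset.mem_union] at h
      rcases h with h | h
      · exact (DerivWcr.add_congr (DerivWcr.mul_add _ _ _) (DerivWcr.refl _)).trans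
          ((d_add_right_comm _ _ _).trans ((DerivWcr.add_congr (iha h)
            (DerivWcr.refl _)).trans (DerivWcr.mul_add _ _ _).symm))
      · exact (DerivWcr.add_congr (DerivWcr.mul_add _ _ _) (DerivWcr.refl _)).trans
          ((DerivWcr.add_assoc _ _ _).trans ((DerivWcr.add_congr (DerivWcr.refl _)
            (ihb h)).trans (DerivWcr.mul_add _ _ _).symm))
  | mul a b iha ihb =>
      simp only [tvars_mul, Finset.mem_union] at h
      rcases h with h | h
      · exact (DerivWcr.add_congr (d_zmul_mul _ _) (DerivWcr.refl _)).trans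
          ((d_add_right_comm _ _ _).trans ((DerivWcr.add_congr (iha h)
            (DerivWcr.refl _)).trans (d_zmul_mul _ _).symm))
      · exact (DerivWcr.add_congr (d_zmul_mul _ _) (DerivWcr.refl _)).trans
          ((DerivWcr.add_assoc _ _ _).trans ((DerivWcr.add_congr (DerivWcr.refl _)
            (ihb h)).trans (d_zmul_mul _ _).symm))

theorem d_ztail (s t : RTerm n) (hp : IsPure t) (h : tvars t ⊆ tvars s) :
    DerivWcr ((zero.mul s).add (zero.mul t)) (zero.mul s) := by
  induction t with
  | var i => exact d_zvar s i (h (by simp))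
  | zero =>
      exact (DerivWcr.add_congr (DerivWcr.refl _) d_zmul_zero).trans
        (DerivWcr.add_zero _)
  | one =>
      exact (DerivWcr.add_congr (DerivWcr.refl _) d_zmul_one).trans
        (DerivWcr.add_zero _)
  | bot => exact absurd hp (by simp)
  | neg t ih =>
      exact (DerivWcr.add_congr (DerivWcr.refl _) (d_zmul_neg t)).trans
        (ih hp (by simpa using h))
  | add a b iha ihb =>
      simp only [tvars_add, Finset.union_subset_iff] at h
      exact (DerivWcr.add_congr (DerivWcr.refl _) (DerivWcr.mul_add _ _ _)).trans
        ((DerivWcr.add_assoc _ _ _).symm.trans ((DerivWcr.add_congr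
          (iha hp.1 h.1) (DerivWcr.refl _)).trans (ihb hp.2 h.2)))
  | mul a b iha ihb =>
      simp only [tvars_mul, Finset.union_subset_iff] at h
      exact (DerivWcr.add_congr (DerivWcr.refl _) (d_zmul_mul _ _)).trans
        ((DerivWcr.add_assoc _ _ _).symm.trans ((DerivWcr.add_congr
          (iha hp.1 h.1) (DerivWcr.refl _)).trans (ihb hp.2 h.2)))

theorem d_zswap (s t : RTerm n) (hs : IsPure s) (ht : IsPure t)
    (h : tvars s = tvars t) : DerivWcr (zero.mul s) (zero.mul t) :=
  (d_ztail s t ht h.ge).symm.trans ((DerivWcr.add_comm _ _).trans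
    (d_ztail t s hs h.le))

theorem d_absorb (s t : RTerm n) (hp : IsPure t) (h : tvars t ⊆ tvars s) :
    DerivWcr (s.add (zero.mul t)) s :=
  (DerivWcr.add_congr (d_add_zmul_self s).symm (DerivWcr.refl _)).trans
    ((DerivWcr.add_assoc _ _ _).trans ((DerivWcr.add_congr (DerivWcr.refl s)
      (d_ztail s t hp h)).trans (d_add_zmul_self s)))

theorem d_zmul_empty (t : RTerm n) (hp : IsPure t) (h : tvars t = ∅) :
    DerivWcr (zero.mul t) zero :=
  (d_zswap t one hp (by simp) (by simp [h])).trans d_zmul_one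
@[simp] theorem tvars_natNumeral (k : ℕ) : tvars (natNumeral n k) = ∅ := by
  induction k with
  | zero => rfl
  | succ k ih =>
      match k, ih with
      | 0, _ => rfl
      | k + 1, ih => simp [natNumeral, ih]

@[simp] theorem isPure_natNumeral (k : ℕ) : IsPure (natNumeral n k) := by
  induction k with
  | zero => trivial
  | succ k ih =>
      match k, ih with
      | 0, _ => trivial
      | k + 1, ih => exact ⟨ih, trivial⟩

@[simp] theorem tvars_intNumeral (c : ℤ) : tvars (intNumeral n c) = ∅ := by
  unfold intNumeral; split <;> simp

@[simp] theorem isPure_intNumeral (c : ℤ) : IsPure (intNumeral n c) := by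
  unfold intNumeral; split <;> simp

theorem intNumeral_zero : intNumeral n 0 = zero := by
  simp [intNumeral]; rfl

theorem d_natNum_succ (m : ℕ) :
    DerivWcr (natNumeral n (m + 1)) ((natNumeral n m).add one) := by
  match m with
  | 0 => exact (d_zero_add one).symm
  | m + 1 => exact DerivWcr.refl _

theorem d_natNum_add (a b : ℕ) :
    DerivWcr ((natNumeral n a).add (natNumeral n b)) (natNumeral n (a + b)) := by
  induction b with
  | zero => exact DerivWcr.add_zero _
  | succ b ih =>
      exact (DerivWcr.add_congr (DerivWcr.refl _) (d_natNum_succ b)).trans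
        (((DerivWcr.add_assoc _ _ _).symm).trans
          ((DerivWcr.add_congr ih (DerivWcr.refl _)).trans (d_natNum_succ (a + b)).symm))

theorem d_intNum_neg (c : ℤ) :
    DerivWcr ((intNumeral n c).neg) (intNumeral n (-c)) := by
  rcases lt_trichotomy c 0 with h | h | h
  · have h1 : ¬ (0 ≤ c) := by omega
    have h2 : (0:ℤ) ≤ -c := by omega
    rw [intNumeral, if_neg h1, intNumeral, if_pos h2]
    exact DerivWcr.neg_neg _
  · subst h; rw [neg_zero, intNumeral_zero]; exact d_neg_zero
  · have h1 : (0:ℤ) ≤ c := by omega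
    have h2 : ¬ ((0:ℤ) ≤ -c) := by omega
    rw [intNumeral, if_pos h1, intNumeral, if_neg h2, _root_.neg_neg]
    exact DerivWcr.refl _

theorem d_natNum_sub (q p : ℕ) :
    DerivWcr ((natNumeral n p).add ((natNumeral n q).neg))
      (intNumeral n ((p : ℤ) - q)) := by
  induction q generalizing p with
  | zero =>
      have he : intNumeral n ((p : ℤ) - 0) = natNumeral n p := by
        rw [sub_zero, intNumeral, if_pos (by positivity), Int.toNat_natCast]
      simp only [Nat.cast_zero]
      rw [he]
      exact (DerivWcr.add_congr (DerivWcr.refl _) d_neg_zero).trans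
        (DerivWcr.add_zero _)
  | succ q ih =>
      match p with
      | 0 =>
          have he : intNumeral n ((0 : ℤ) - (q + 1 : ℕ)) =
              (natNumeral n (q + 1)).neg := by
            rw [intNumeral, if_neg (by omega)]
            congr 2
          simp only [Nat.cast_zero]
          rw [he]
          exact d_zero_add _
      | p + 1 =>
          have he : ((p + 1 : ℕ) : ℤ) - ((q + 1 : ℕ) : ℤ) = (p : ℤ) - q := by
            push_cast; ring
          rw [he]
          calc (natNumeral n (p + 1)).add ((natNumeral n (q + 1)).neg)
              ≋ ((natNumeral n p).add one).add
                  (((natNumeral n q).add one).neg) :=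
                DerivWcr.add_congr (d_natNum_succ p) (DerivWcr.neg_congr (d_natNum_succ q))
            _ ≋ ((natNumeral n p).add one).add
                  (((natNumeral n q).neg).add one.neg) :=
                DerivWcr.add_congr (DerivWcr.refl _) (d_neg_add _ _)
            _ ≋ ((natNumeral n p).add ((natNumeral n q).neg)).add
                  (one.add one.neg) := d_add_add_add _ _ _ _
            _ ≋ (intNumeral n ((p : ℤ) - q)).add (zero.mul one) :=
                DerivWcr.add_congr (ih p) (DerivWcr.add_neg one)
            _ ≋ (intNumeral n ((p : ℤ) - q)).add zero :=
                DerivWcr.add_congr (DerivWcr.refl _) d_zmul_one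
            _ ≋ intNumeral n ((p : ℤ) - q) := DerivWcr.add_zero _

theorem d_intNum_add (a b : ℤ) :
    DerivWcr ((intNumeral n a).add (intNumeral n b)) (intNumeral n (a + b)) := by
  have key : ∀ a b : ℤ, 0 ≤ a → b < 0 →
      DerivWcr ((intNumeral n a).add (intNumeral n b)) (intNumeral n (a + b)) := by
    intro a b ha hb
    have h2 : ¬ ((0:ℤ) ≤ b) := by omega
    have he : (a : ℤ) + b = ((a.toNat : ℤ) - ((-b).toNat : ℤ)) := by omega
    rw [intNumeral, if_pos ha, intNumeral, if_neg h2, he]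
    exact d_natNum_sub _ _
  rcases le_or_gt 0 a with ha | ha <;> rcases le_or_gt 0 b with hb | hb
  · have he : intNumeral n (a + b) = natNumeral n (a.toNat + b.toNat) := by
      rw [intNumeral, if_pos (by omega)]
      congr 1; omega
    rw [intNumeral, if_pos ha, intNumeral, if_pos hb, he]
    exact d_natNum_add _ _
  · exact key a b ha hb
  · rw [show a + b = b + a by ring]
    exact (DerivWcr.add_comm _ _).trans (key b a hb ha)
  · have h1 : ¬ ((0:ℤ) ≤ a) := by omega
    have h2 : ¬ ((0:ℤ) ≤ b) := by omega
    have h3 : ¬ ((0:ℤ) ≤ a + b) := by omega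
    have he : (-(a+b)).toNat = (-a).toNat + (-b).toNat := by omega
    rw [intNumeral, if_neg h1, intNumeral, if_neg h2, intNumeral, if_neg h3, he]
    exact (d_neg_add _ _).symm.trans (DerivWcr.neg_congr (d_natNum_add _ _))

theorem d_natNum_mul (a b : ℕ) :
    DerivWcr ((natNumeral n a).mul (natNumeral n b)) (natNumeral n (a * b)) := by
  induction b with
  | zero =>
      exact (DerivWcr.mul_comm _ _).trans (d_zmul_empty _ (by simp) (by simp))
  | succ b ih =>
      rw [Nat.mul_succ]
      calc (natNumeral n a).mul (natNumeral n (b + 1))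
          ≋ (natNumeral n a).mul ((natNumeral n b).add one) :=
            DerivWcr.mul_congr (DerivWcr.refl _) (d_natNum_succ b)
        _ ≋ ((natNumeral n a).mul (natNumeral n b)).add
              ((natNumeral n a).mul one) := DerivWcr.mul_add _ _ _
        _ ≋ (natNumeral n (a * b)).add (natNumeral n a) :=
            DerivWcr.add_congr ih (d_mul_one _)
        _ ≋ natNumeral n (a * b + a) := d_natNum_add _ _

theorem d_intNum_mul (a b : ℤ) :
    DerivWcr ((intNumeral n a).mul (intNumeral n b)) (intNumeral n (a * b)) := by
  have cast_eq : ∀ a b : ℤ, 0 ≤ a → 0 ≤ b → (a * b).toNat = a.toNat * b.toNat := by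
    intro a b ha hb
    have h : a * b = ((a.toNat * b.toNat : ℕ) : ℤ) := by
      push_cast [Int.toNat_of_nonneg ha, Int.toNat_of_nonneg hb]
      ring
    rw [h, Int.toNat_natCast]
  have nonneg : ∀ a b : ℤ, 0 ≤ a → 0 ≤ b →
      DerivWcr ((intNumeral n a).mul (intNumeral n b)) (intNumeral n (a * b)) := by
    intro a b ha hb
    rw [intNumeral, if_pos ha, intNumeral, if_pos hb, intNumeral,
      if_pos (by positivity), cast_eq a b ha hb]
    exact d_natNum_mul _ _
  have mixed : ∀ a b : ℤ, 0 ≤ a → b < 0 →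
      DerivWcr ((intNumeral n a).mul (intNumeral n b)) (intNumeral n (a * b)) := by
    intro a b ha hb
    have h2 : ¬ ((0:ℤ) ≤ b) := by omega
    have he : intNumeral n b = (intNumeral n (-b)).neg := by
      rw [intNumeral, if_neg h2, intNumeral, if_pos (by omega)]
    have he2 : a * b = -(a * (-b)) := by ring
    rw [he, he2]
    exact (d_mul_neg _ _).trans ((DerivWcr.neg_congr (nonneg a (-b) ha (by omega))).trans
      (d_intNum_neg _))
  rcases le_or_gt 0 a with ha | ha <;> rcases le_or_gt 0 b with hb | hb
  · exact nonneg a b ha hb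
  · exact mixed a b ha hb
  · rw [show a * b = b * a by ring]
    exact (DerivWcr.mul_comm _ _).trans (mixed b a hb ha)
  · have he : intNumeral n a = (intNumeral n (-a)).neg := by
      rw [intNumeral, if_neg (by omega), intNumeral, if_pos (by omega)]
    have he2 : a * b = -((-a) * b) := by ring
    rw [he, he2]
    exact (d_neg_mul _ _).trans ((DerivWcr.neg_congr (mixed (-a) b (by omega) hb)).trans
      (d_intNum_neg _))
theorem d_pow_succ (t : RTerm n) (m : ℕ) :
    DerivWcr (t.pow (m + 1)) ((t.pow m).mul t) := by
  match m with
  | 0 => exact (DerivWcr.one_mul t).symm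
  | m + 1 => exact DerivWcr.refl _

theorem d_pow_add (t : RTerm n) (a b : ℕ) :
    DerivWcr ((t.pow a).mul (t.pow b)) (t.pow (a + b)) := by
  induction b with
  | zero => exact d_mul_one _
  | succ b ih =>
      exact (DerivWcr.mul_congr (DerivWcr.refl _) (d_pow_succ t b)).trans
        ((DerivWcr.mul_assoc _ _ _).trans ((DerivWcr.mul_congr ih
          (DerivWcr.refl t)).trans (d_pow_succ t (a + b)).symm))

@[simp] theorem isPure_pow (t : RTerm n) (hp : IsPure t) (k : ℕ) : IsPure (t.pow k) := by
  induction k with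
  | zero => trivial
  | succ k ih =>
      match k, ih with
      | 0, _ => exact hp
      | k + 1, ih => exact ⟨ih, hp⟩

theorem mem_tvars_pow_var {i j : Fin n} {k : ℕ} :
    j ∈ tvars ((var i).pow k) ↔ j = i ∧ k ≠ 0 := by
  induction k with
  | zero => simp [pow]
  | succ k ih =>
      match k, ih with
      | 0, _ => simp [pow]
      | k + 1, ih => simp [pow, ih]

theorem mem_tvars_foldr_mul {ι : Type*} (l : List ι) (f : ι → RTerm n) (j : Fin n) :
    j ∈ tvars ((l.map f).foldr mul one) ↔ ∃ i ∈ l, j ∈ tvars (f i) := by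
  induction l with
  | nil => simp
  | cons a l ih => simp [ih]

theorem isPure_foldr_mul {ι : Type*} (l : List ι) (f : ι → RTerm n)
    (h : ∀ i ∈ l, IsPure (f i)) : IsPure ((l.map f).foldr mul one) := by
  induction l with
  | nil => trivial
  | cons a l ih => exact ⟨h a (by simp), ih fun i hi => h i (by simp [hi])⟩

theorem isPure_monTerm (d : Fin n →₀ ℕ) : IsPure (monTerm d) :=
  isPure_foldr_mul _ _ fun i _ => isPure_pow (var i) trivial _

theorem tvars_monTerm (d : Fin n →₀ ℕ) : tvars (monTerm d) = d.support := by
  ext j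
  rw [monTerm, mem_tvars_foldr_mul]
  simp only [List.mem_finRange, true_and, mem_tvars_pow_var]
  constructor
  · rintro ⟨i, rfl, h⟩
    simpa [Finsupp.mem_support_iff] using h
  · intro h
    exact ⟨j, rfl, by simpa [Finsupp.mem_support_iff] using h⟩

theorem d_foldr_mul_mul {ι : Type*} (l : List ι) (f g h : ι → RTerm n)
    (hfg : ∀ i ∈ l, DerivWcr ((f i).mul (g i)) (h i)) :
    DerivWcr (((l.map f).foldr mul one).mul ((l.map g).foldr mul one))
      ((l.map h).foldr mul one) := by
  induction l with
  | nil => exact DerivWcr.one_mul one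
  | cons a l ih =>
      exact (d_mul_mul_mul _ _ _ _).trans (DerivWcr.mul_congr
        (hfg a (by simp)) (ih fun i hi => hfg i (by simp [hi])))

theorem d_monTerm_mul (d e : Fin n →₀ ℕ) :
    DerivWcr ((monTerm d).mul (monTerm e)) (monTerm (d + e)) := by
  refine d_foldr_mul_mul _ _ _ _ fun i _ => ?_
  rw [Finsupp.add_apply]
  exact d_pow_add (var i) (d i) (e i)

/-- Sum of a list of terms. -/
def sumT (l : List (RTerm n)) : RTerm n := l.foldr add zero

@[simp] theorem sumT_nil : sumT ([] : List (RTerm n)) = zero := rfl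
@[simp] theorem sumT_cons (a : RTerm n) (l : List (RTerm n)) :
    sumT (a :: l) = a.add (sumT l) := rfl

theorem isPure_sumT (l : List (RTerm n)) (h : ∀ t ∈ l, IsPure t) :
    IsPure (sumT l) := by
  induction l with
  | nil => trivial
  | cons a l ih => exact ⟨h a (by simp), ih fun t ht => h t (by simp [ht])⟩

theorem mem_tvars_sumT {l : List (RTerm n)} {j : Fin n} :
    j ∈ tvars (sumT l) ↔ ∃ t ∈ l, j ∈ tvars t := by
  induction l with
  | nil => simp
  | cons a l ih => simp [ih]

theorem d_sum_perm {l l' : List (RTerm n)} (h : l.Perm l') :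
    DerivWcr (sumT l) (sumT l') := by
  induction h with
  | nil => exact DerivWcr.refl _
  | cons a _ ih => exact DerivWcr.add_congr (DerivWcr.refl a) ih
  | swap a b l => exact d_add_left_comm _ _ _
  | trans _ _ ih1 ih2 => exact ih1.trans ih2

theorem d_sum_append (l₁ l₂ : List (RTerm n)) :
    DerivWcr (sumT (l₁ ++ l₂)) ((sumT l₁).add (sumT l₂)) := by
  induction l₁ with
  | nil => exact (d_zero_add _).symm
  | cons a l ih =>
      exact (DerivWcr.add_congr (DerivWcr.refl a) ih).trans
        (DerivWcr.add_assoc _ _ _).symm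

theorem d_sum_map_congr {ι : Type*} (l : List ι) (f g : ι → RTerm n)
    (h : ∀ i ∈ l, DerivWcr (f i) (g i)) :
    DerivWcr (sumT (l.map f)) (sumT (l.map g)) := by
  induction l with
  | nil => exact DerivWcr.refl _
  | cons a l ih =>
      exact DerivWcr.add_congr (h a (by simp)) (ih fun i hi => h i (by simp [hi]))

theorem d_single_mul_sum (a : RTerm n) (l : List (RTerm n)) :
    DerivWcr (a.mul (sumT l)) ((sumT (l.map fun b => a.mul b)).add (zero.mul a)) := by
  induction l with
  | nil => exact (DerivWcr.mul_comm a zero).trans (d_zero_add _).symm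
  | cons b l ih =>
      exact (DerivWcr.mul_add a b (sumT l)).trans
        ((DerivWcr.add_congr (DerivWcr.refl _) ih).trans
          (DerivWcr.add_assoc _ _ _).symm)
theorem polyTerm_def (γ : MvPolynomial (Fin n) ℤ) :
    polyTerm γ = sumT (γ.support.toList.map fun e =>
      (intNumeral n (γ.coeff e)).mul (monTerm e)) := rfl

theorem isPure_polyTerm (γ : MvPolynomial (Fin n) ℤ) : IsPure (polyTerm γ) := by
  rw [polyTerm_def]
  refine isPure_sumT _ ?_
  intro t ht
  simp only [List.mem_map] at ht
  obtain ⟨e, _, rfl⟩ := ht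
  exact ⟨isPure_intNumeral _, isPure_monTerm _⟩

theorem tvars_polyTerm (γ : MvPolynomial (Fin n) ℤ) :
    tvars (polyTerm γ) = γ.vars := by
  ext j
  rw [polyTerm_def, mem_tvars_sumT, MvPolynomial.mem_vars]
  constructor
  · rintro ⟨t, ht, hj⟩
    simp only [List.mem_map] at ht
    obtain ⟨e, he, rfl⟩ := ht
    rw [Finset.mem_toList] at he
    refine ⟨e, he, ?_⟩
    simpa [tvars_monTerm] using hj
  · rintro ⟨e, he, hj⟩
    refine ⟨(intNumeral n (γ.coeff e)).mul (monTerm e),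
      List.mem_map_of_mem (Finset.mem_toList.2 he), ?_⟩
    simp [tvars_monTerm, hj]

theorem d_polyTerm_cons (γ : MvPolynomial (Fin n) ℤ) (d : Fin n →₀ ℕ)
    (hd : d ∈ γ.support) :
    DerivWcr (polyTerm γ)
      (((intNumeral n (γ.coeff d)).mul (monTerm d)).add
        (sumT ((γ.support.erase d).toList.map fun e =>
          (intNumeral n (γ.coeff e)).mul (monTerm e)))) := by
  rw [polyTerm_def]
  have hp := Finset.toList_insert (Finset.notMem_erase d γ.support)
  rw [Finset.insert_erase hd] at hp
  exact d_sum_perm (hp.map _)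

theorem d_insertMon (γ : MvPolynomial (Fin n) ℤ) (d : Fin n →₀ ℕ) (c : ℤ) :
    ∃ g : RTerm n, IsPure g ∧ tvars g ⊆ γ.vars ∪ d.support ∧
      DerivWcr ((polyTerm γ).add ((intNumeral n c).mul (monTerm d)))
        ((polyTerm (γ + MvPolynomial.monomial d c)).add (zero.mul g)) := by
  by_cases hc : c = 0
  · subst hc
    refine ⟨monTerm d, isPure_monTerm d, by simp [tvars_monTerm], ?_⟩
    rw [map_zero, _root_.add_zero, intNumeral_zero]
    exact DerivWcr.refl _
  · have hcd : (γ + MvPolynomial.monomial d c).coeff d = γ.coeff d + c := by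
      simp [MvPolynomial.coeff_add, MvPolynomial.coeff_monomial]
    have hco : ∀ e, e ≠ d → (γ + MvPolynomial.monomial d c).coeff e = γ.coeff e := by
      intro e he
      simp [MvPolynomial.coeff_add, MvPolynomial.coeff_monomial, (Ne.symm he)]
    by_cases hd : d ∈ γ.support
    · by_cases h0 : γ.coeff d + c = 0
      · -- cancellation
        have hs : (γ + MvPolynomial.monomial d c).support = γ.support.erase d := by
          ext e
          by_cases he : e = d
          · subst he
            simp [MvPolynomial.mem_support_iff, hcd, h0]
          · simp [MvPolynomial.mem_support_iff, hco e he, he, Finset.mem_erase]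
        have hlist : ((γ.support.erase d).toList.map fun e =>
              (intNumeral n (γ.coeff e)).mul (monTerm e)) =
            ((γ + MvPolynomial.monomial d c).support.toList.map fun e =>
              (intNumeral n ((γ + MvPolynomial.monomial d c).coeff e)).mul (monTerm e)) := by
          rw [hs]
          refine (List.map_congr_left ?_).symm
          intro e he
          rw [Finset.mem_toList, Finset.mem_erase] at he
          rw [hco e he.1]
        refine ⟨monTerm d, isPure_monTerm d, by simp [tvars_monTerm], ?_⟩
        calc (polyTerm γ).add ((intNumeral n c).mul (monTerm d))
            ≋ (((intNumeral n (γ.coeff d)).mul (monTerm d)).add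
                (sumT ((γ.support.erase d).toList.map fun e =>
                  (intNumeral n (γ.coeff e)).mul (monTerm e)))).add
                ((intNumeral n c).mul (monTerm d)) :=
              DerivWcr.add_congr (d_polyTerm_cons γ d hd) (DerivWcr.refl _)
          _ ≋ (((intNumeral n (γ.coeff d)).mul (monTerm d)).add
                ((intNumeral n c).mul (monTerm d))).add
                (sumT ((γ.support.erase d).toList.map fun e =>
                  (intNumeral n (γ.coeff e)).mul (monTerm e))) := d_add_right_comm _ _ _
          _ ≋ (zero.mul (monTerm d)).add
                (sumT ((γ.support.erase d).toList.map fun e =>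
                  (intNumeral n (γ.coeff e)).mul (monTerm e))) := by
              refine DerivWcr.add_congr ((d_add_mul _ _ _).symm.trans
                (DerivWcr.mul_congr ((d_intNum_add _ _).trans ?_) (DerivWcr.refl _)))
                (DerivWcr.refl _)
              rw [h0, intNumeral_zero]
              exact DerivWcr.refl _
          _ ≋ (sumT ((γ.support.erase d).toList.map fun e =>
                  (intNumeral n (γ.coeff e)).mul (monTerm e))).add
                (zero.mul (monTerm d)) := DerivWcr.add_comm _ _
          _ ≋ (polyTerm (γ + MvPolynomial.monomial d c)).add (zero.mul (monTerm d)) := by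
              rw [polyTerm_def (γ + MvPolynomial.monomial d c), ← hlist]
              exact DerivWcr.refl _
      · -- combine, nonzero result
        have hd' : d ∈ (γ + MvPolynomial.monomial d c).support := by
          rw [MvPolynomial.mem_support_iff, hcd]
          exact h0
        have hs : (γ + MvPolynomial.monomial d c).support.erase d = γ.support.erase d := by
          ext e
          by_cases he : e = d
          · simp [he]
          · simp [Finset.mem_erase, he, MvPolynomial.mem_support_iff, hco e he]
        have hlist : (((γ + MvPolynomial.monomial d c).support.erase d).toList.map fun e =>
              (intNumeral n ((γ + MvPolynomial.monomial d c).coeff e)).mul (monTerm e)) =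
            ((γ.support.erase d).toList.map fun e =>
              (intNumeral n (γ.coeff e)).mul (monTerm e)) := by
          rw [hs]
          refine List.map_congr_left ?_
          intro e he
          rw [Finset.mem_toList, Finset.mem_erase] at he
          rw [hco e he.1]
        refine ⟨one, trivial, by simp, ?_⟩
        calc (polyTerm γ).add ((intNumeral n c).mul (monTerm d))
            ≋ (((intNumeral n (γ.coeff d)).mul (monTerm d)).add
                (sumT ((γ.support.erase d).toList.map fun e =>
                  (intNumeral n (γ.coeff e)).mul (monTerm e)))).add
                ((intNumeral n c).mul (monTerm d)) :=
              DerivWcr.add_congr (d_polyTerm_cons γ d hd) (DerivWcr.refl _)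
          _ ≋ (((intNumeral n (γ.coeff d)).mul (monTerm d)).add
                ((intNumeral n c).mul (monTerm d))).add
                (sumT ((γ.support.erase d).toList.map fun e =>
                  (intNumeral n (γ.coeff e)).mul (monTerm e))) := d_add_right_comm _ _ _
          _ ≋ ((intNumeral n (γ.coeff d + c)).mul (monTerm d)).add
                (sumT ((γ.support.erase d).toList.map fun e =>
                  (intNumeral n (γ.coeff e)).mul (monTerm e))) :=
              DerivWcr.add_congr ((d_add_mul _ _ _).symm.trans
                (DerivWcr.mul_congr (d_intNum_add _ _) (DerivWcr.refl _)))
                (DerivWcr.refl _)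
          _ ≋ polyTerm (γ + MvPolynomial.monomial d c) := by
              rw [← hcd, ← hlist]
              exact (d_polyTerm_cons (γ + MvPolynomial.monomial d c) d hd').symm
          _ ≋ (polyTerm (γ + MvPolynomial.monomial d c)).add zero :=
              (DerivWcr.add_zero _).symm
          _ ≋ (polyTerm (γ + MvPolynomial.monomial d c)).add (zero.mul one) :=
              DerivWcr.add_congr (DerivWcr.refl _) d_zmul_one.symm
    · -- new monomial
      have hd0 : γ.coeff d = 0 := by rwa [MvPolynomial.notMem_support_iff] at hd
      have hcd' : (γ + MvPolynomial.monomial d c).coeff d = c := by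
        rw [hcd, hd0, zero_add]
      have hs : (γ + MvPolynomial.monomial d c).support = insert d γ.support := by
        ext e
        by_cases he : e = d
        · subst he
          simp [MvPolynomial.mem_support_iff, hcd, hd0, hc]
        · simp [MvPolynomial.mem_support_iff, hco e he, he, Finset.mem_insert]
      have hlist : (γ.support.toList.map fun e =>
            (intNumeral n (γ.coeff e)).mul (monTerm e)) =
          (γ.support.toList.map fun e =>
            (intNumeral n ((γ + MvPolynomial.monomial d c).coeff e)).mul (monTerm e)) := by
        refine (List.map_congr_left ?_).symm
        intro e he
        rw [Finset.mem_toList] at he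
        have : e ≠ d := fun h => hd (h ▸ he)
        rw [hco e this]
      refine ⟨one, trivial, by simp, ?_⟩
      calc (polyTerm γ).add ((intNumeral n c).mul (monTerm d))
          ≋ ((intNumeral n c).mul (monTerm d)).add (polyTerm γ) := DerivWcr.add_comm _ _
        _ ≋ sumT ((d :: γ.support.toList).map fun e =>
              (intNumeral n ((γ + MvPolynomial.monomial d c).coeff e)).mul (monTerm e)) := by
            rw [polyTerm_def γ, hlist, List.map_cons, sumT_cons, hcd']
            exact DerivWcr.refl _
        _ ≋ sumT ((insert d γ.support).toList.map fun e =>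
              (intNumeral n ((γ + MvPolynomial.monomial d c).coeff e)).mul (monTerm e)) :=
            d_sum_perm (((Finset.toList_insert hd).symm).map _)
        _ ≋ polyTerm (γ + MvPolynomial.monomial d c) := by
            rw [polyTerm_def (γ + MvPolynomial.monomial d c), hs]
            exact DerivWcr.refl _
        _ ≋ (polyTerm (γ + MvPolynomial.monomial d c)).add zero :=
            (DerivWcr.add_zero _).symm
        _ ≋ (polyTerm (γ + MvPolynomial.monomial d c)).add (zero.mul one) :=
            DerivWcr.add_congr (DerivWcr.refl _) d_zmul_one.symm
theorem vars_monomial_subset (d : Fin n →₀ ℕ) (c : ℤ) :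
    (MvPolynomial.monomial d c).vars ⊆ d.support := by
  by_cases hc : c = 0
  · subst hc
    simp [MvPolynomial.vars_0]
  · rw [MvPolynomial.vars_monomial hc]

/-- Union of the supports of the monomials in a list. -/
def suppUnion (l : List ((Fin n →₀ ℕ) × ℤ)) : Finset (Fin n) :=
  l.foldr (fun p s => p.1.support ∪ s) ∅

@[simp] theorem suppUnion_nil : suppUnion ([] : List ((Fin n →₀ ℕ) × ℤ)) = ∅ := rfl
@[simp] theorem suppUnion_cons (p : (Fin n →₀ ℕ) × ℤ) (l) :
    suppUnion (p :: l) = p.1.support ∪ suppUnion l := rfl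

theorem suppUnion_subset {l : List ((Fin n →₀ ℕ) × ℤ)} {V : Finset (Fin n)}
    (h : ∀ p ∈ l, p.1.support ⊆ V) : suppUnion l ⊆ V := by
  induction l with
  | nil => simp
  | cons p l ih =>
      simp only [suppUnion_cons, Finset.union_subset_iff]
      exact ⟨h p (by simp), ih fun q hq => h q (by simp [hq])⟩

theorem d_insertList (l : List ((Fin n →₀ ℕ) × ℤ)) :
    ∀ γ : MvPolynomial (Fin n) ℤ, ∃ g : RTerm n, IsPure g ∧
      tvars g ⊆ γ.vars ∪ suppUnion l ∧
      DerivWcr ((polyTerm γ).add (sumT (l.map fun p =>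
          (intNumeral n p.2).mul (monTerm p.1))))
        ((polyTerm (γ + (l.map fun p => MvPolynomial.monomial p.1 p.2).sum)).add
          (zero.mul g)) := by
  induction l with
  | nil =>
      intro γ
      refine ⟨one, trivial, by simp, ?_⟩
      simp only [List.map_nil, List.sum_nil, _root_.add_zero, sumT_nil]
      exact (DerivWcr.add_zero _).trans ((DerivWcr.add_zero _).symm.trans
        (DerivWcr.add_congr (DerivWcr.refl _) d_zmul_one.symm))
  | cons p l ih =>
      intro γ
      obtain ⟨g₁, hg₁p, hg₁v, h₁⟩ := d_insertMon γ p.1 p.2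
      obtain ⟨g₂, hg₂p, hg₂v, h₂⟩ := ih (γ + MvPolynomial.monomial p.1 p.2)
      refine ⟨g₂.mul g₁, ⟨hg₂p, hg₁p⟩, ?_, ?_⟩
      · intro j hj
        simp only [tvars_mul, Finset.mem_union] at hj
        simp only [suppUnion_cons, Finset.mem_union]
        rcases hj with hj | hj
        · have := hg₂v hj
          simp only [Finset.mem_union] at this
          rcases this with h | h
          · have := MvPolynomial.vars_add_subset γ (MvPolynomial.monomial p.1 p.2) h
            simp only [Finset.mem_union] at this
            rcases this with h' | h'
            · exact Or.inl h'
            · exact Or.inr (Or.inl (vars_monomial_subset p.1 p.2 h'))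
          · exact Or.inr (Or.inr h)
        · have := hg₁v hj
          simp only [Finset.mem_union] at this
          tauto
      · have hpoly : γ + ((p :: l).map fun q => MvPolynomial.monomial q.1 q.2).sum =
            (γ + MvPolynomial.monomial p.1 p.2) +
              (l.map fun q => MvPolynomial.monomial q.1 q.2).sum := by
          rw [List.map_cons, List.sum_cons, _root_.add_assoc]
        rw [hpoly, List.map_cons, sumT_cons]
        calc (polyTerm γ).add (((intNumeral n p.2).mul (monTerm p.1)).add
              (sumT (l.map fun q => (intNumeral n q.2).mul (monTerm q.1))))
            ≋ ((polyTerm γ).add ((intNumeral n p.2).mul (monTerm p.1))).add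
              (sumT (l.map fun q => (intNumeral n q.2).mul (monTerm q.1))) :=
            (DerivWcr.add_assoc _ _ _).symm
          _ ≋ ((polyTerm (γ + MvPolynomial.monomial p.1 p.2)).add (zero.mul g₁)).add
              (sumT (l.map fun q => (intNumeral n q.2).mul (monTerm q.1))) :=
            DerivWcr.add_congr h₁ (DerivWcr.refl _)
          _ ≋ ((polyTerm (γ + MvPolynomial.monomial p.1 p.2)).add
              (sumT (l.map fun q => (intNumeral n q.2).mul (monTerm q.1)))).add
              (zero.mul g₁) := d_add_right_comm _ _ _
          _ ≋ ((polyTerm ((γ + MvPolynomial.monomial p.1 p.2) +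
              (l.map fun q => MvPolynomial.monomial q.1 q.2).sum)).add
              (zero.mul g₂)).add (zero.mul g₁) :=
            DerivWcr.add_congr h₂ (DerivWcr.refl _)
          _ ≋ (polyTerm ((γ + MvPolynomial.monomial p.1 p.2) +
              (l.map fun q => MvPolynomial.monomial q.1 q.2).sum)).add
              ((zero.mul g₂).add (zero.mul g₁)) := DerivWcr.add_assoc _ _ _
          _ ≋ (polyTerm ((γ + MvPolynomial.monomial p.1 p.2) +
              (l.map fun q => MvPolynomial.monomial q.1 q.2).sum)).add
              (zero.mul (g₂.mul g₁)) :=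
            DerivWcr.add_congr (DerivWcr.refl _) (d_zmul_mul g₂ g₁).symm

theorem d_sum_mul_sum (l₂ : List (RTerm n)) :
    ∀ l₁ : List (RTerm n), (∀ t ∈ l₁, IsPure t) → (∀ t ∈ l₂, IsPure t) →
    ∃ g : RTerm n, IsPure g ∧ tvars g ⊆ tvars (sumT l₁) ∪ tvars (sumT l₂) ∧
      DerivWcr ((sumT l₁).mul (sumT l₂))
        ((sumT (l₁.flatMap fun a => l₂.map fun b => a.mul b)).add (zero.mul g)) := by
  intro l₁
  induction l₁ with
  | nil =>
      intro _ h₂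
      refine ⟨sumT l₂, isPure_sumT l₂ h₂, by simp, ?_⟩
      exact (d_zero_add _).symm
  | cons a l ih =>
      intro h₁ h₂
      obtain ⟨g', hg'p, hg'v, h'⟩ := ih (fun t ht => h₁ t (by simp [ht])) h₂
      refine ⟨a.mul g', ⟨h₁ a (by simp), hg'p⟩, ?_, ?_⟩
      · intro j hj
        simp only [tvars_mul, Finset.mem_union] at hj
        simp only [sumT_cons, tvars_add, Finset.mem_union]
        rcases hj with hj | hj
        · exact Or.inl (Or.inl hj)
        · have := hg'v hj
          simp only [Finset.mem_union] at this
          tauto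
      · rw [List.flatMap_cons]
        calc (sumT (a :: l)).mul (sumT l₂)
            ≋ (a.mul (sumT l₂)).add ((sumT l).mul (sumT l₂)) := d_add_mul _ _ _
          _ ≋ ((sumT (l₂.map fun b => a.mul b)).add (zero.mul a)).add
              ((sumT (l.flatMap fun x => l₂.map fun b => x.mul b)).add
                (zero.mul g')) :=
            DerivWcr.add_congr (d_single_mul_sum a l₂) h'
          _ ≋ ((sumT (l₂.map fun b => a.mul b)).add
              (sumT (l.flatMap fun x => l₂.map fun b => x.mul b))).add
              ((zero.mul a).add (zero.mul g')) := d_add_add_add _ _ _ _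
          _ ≋ (sumT ((l₂.map fun b => a.mul b) ++
              (l.flatMap fun x => l₂.map fun b => x.mul b))).add
              (zero.mul (a.mul g')) :=
            DerivWcr.add_congr (d_sum_append _ _).symm (d_zmul_mul a g').symm

theorem mem_vars_iff_degreeOf_ne_zero (p : MvPolynomial (Fin n) ℤ) (j : Fin n) :
    j ∈ p.vars ↔ MvPolynomial.degreeOf j p ≠ 0 := by
  rw [MvPolynomial.vars_def, MvPolynomial.degreeOf_def, Multiset.mem_toFinset]
  exact Multiset.count_ne_zero.symm

theorem vars_subset_mul {α β : MvPolynomial (Fin n) ℤ} (hβ : β ≠ 0) :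
    α.vars ⊆ (α * β).vars := by
  intro i hi
  have hα : α ≠ 0 := by
    rintro rfl
    simp [MvPolynomial.vars_0] at hi
  obtain ⟨m, rfl⟩ : ∃ m, n = m + 1 := ⟨n - 1, by have := i.pos; omega⟩
  set e := Equiv.swap (0 : Fin (m + 1)) i with he_def
  have hei : e i = 0 := Equiv.swap_apply_right 0 i
  have hdeg : ∀ p : MvPolynomial (Fin (m + 1)) ℤ,
      MvPolynomial.degreeOf 0 (MvPolynomial.rename (⇑e) p) = MvPolynomial.degreeOf i p := by
    intro p
    have h := MvPolynomial.degreeOf_rename_of_injective (p := p) e.injective i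
    rwa [hei] at h
  have hrα : MvPolynomial.rename (⇑e) α ≠ 0 := fun h =>
    hα (MvPolynomial.rename_injective (⇑e) e.injective (by simpa using h))
  have hrβ : MvPolynomial.rename (⇑e) β ≠ 0 := fun h =>
    hβ (MvPolynomial.rename_injective (⇑e) e.injective (by simpa using h))
  set F := MvPolynomial.finSuccEquiv ℤ m
  have hFα : F (MvPolynomial.rename (⇑e) α) ≠ 0 := fun h =>
    hrα (F.injective (by simpa using h))
  have hFβ : F (MvPolynomial.rename (⇑e) β) ≠ 0 := fun h =>
    hrβ (F.injective (by simpa using h))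
  have hmul : F (MvPolynomial.rename (⇑e) (α * β)) =
      F (MvPolynomial.rename (⇑e) α) * F (MvPolynomial.rename (⇑e) β) := by
    rw [map_mul, map_mul]
  have hnd : (F (MvPolynomial.rename (⇑e) (α * β))).natDegree =
      (F (MvPolynomial.rename (⇑e) α)).natDegree +
        (F (MvPolynomial.rename (⇑e) β)).natDegree := by
    rw [hmul, Polynomial.natDegree_mul hFα hFβ]
  have h1 : (F (MvPolynomial.rename (⇑e) α)).natDegree ≠ 0 := by
    rw [MvPolynomial.natDegree_finSuccEquiv, hdeg]
    rw [mem_vars_iff_degreeOf_ne_zero] at hi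
    exact hi
  rw [mem_vars_iff_degreeOf_ne_zero, ← hdeg, ← MvPolynomial.natDegree_finSuccEquiv, hnd]
  omega
theorem sum_flatMap_poly {I : Type*} (A : List I)
    (F : I → List (MvPolynomial (Fin n) ℤ)) :
    (A.flatMap F).sum = (A.map fun a => (F a).sum).sum := by
  induction A with
  | nil => simp
  | cons a A ih => simp [List.flatMap_cons, List.sum_append, ih]
end RTerm

open RTerm in
/-- For nonzero integer polynomials `α` and `β`, `E_wcr,⊥ ⊢ α* · β* = (α·β)*`:
the product of two nonzero polynomial sumterms is provably equal to a polynomial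
sumterm. -/
theorem polyTerm_mul (n : ℕ) (α β : MvPolynomial (Fin n) ℤ)
    (hα : α ≠ 0) (hβ : β ≠ 0) :
    DerivWcr ((polyTerm α).mul (polyTerm β)) (polyTerm (α * β)) := by
  classical
  set l₁ := α.support.toList.map fun e => (intNumeral n (α.coeff e)).mul (monTerm e)
    with hl₁
  set l₂ := β.support.toList.map fun e => (intNumeral n (β.coeff e)).mul (monTerm e)
    with hl₂
  have hp₁ : ∀ t ∈ l₁, IsPure t := by
    intro t ht
    simp only [hl₁, List.mem_map] at ht
    obtain ⟨e, _, rfl⟩ := ht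
    exact ⟨isPure_intNumeral _, isPure_monTerm _⟩
  have hp₂ : ∀ t ∈ l₂, IsPure t := by
    intro t ht
    simp only [hl₂, List.mem_map] at ht
    obtain ⟨e, _, rfl⟩ := ht
    exact ⟨isPure_intNumeral _, isPure_monTerm _⟩
  obtain ⟨g₁, hg₁p, hg₁v, h₁⟩ := d_sum_mul_sum l₂ l₁ hp₁ hp₂
  set L := α.support.toList.flatMap fun d => β.support.toList.map fun e => (d, e)
    with hL
  set l := L.map fun p : (Fin n →₀ ℕ) × (Fin n →₀ ℕ) =>
    (p.1 + p.2, α.coeff p.1 * β.coeff p.2) with hl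
  have hE1 : (l₁.flatMap fun a => l₂.map fun b => a.mul b) =
      L.map fun p => ((intNumeral n (α.coeff p.1)).mul (monTerm p.1)).mul
        ((intNumeral n (β.coeff p.2)).mul (monTerm p.2)) := by
    rw [hl₁, hl₂, hL]
    simp only [List.flatMap_map, List.map_flatMap, List.map_map, Function.comp]
    rfl
  have h₃ : DerivWcr
      (sumT (L.map fun p => ((intNumeral n (α.coeff p.1)).mul (monTerm p.1)).mul
        ((intNumeral n (β.coeff p.2)).mul (monTerm p.2))))
      (sumT (L.map fun p =>
        (intNumeral n (α.coeff p.1 * β.coeff p.2)).mul (monTerm (p.1 + p.2)))) :=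
    d_sum_map_congr L _ _ fun p _ => (d_mul_mul_mul _ _ _ _).trans
      (DerivWcr.mul_congr (d_intNum_mul _ _) (d_monTerm_mul _ _))
  have hE2 : (L.map fun p =>
      (intNumeral n (α.coeff p.1 * β.coeff p.2)).mul (monTerm (p.1 + p.2))) =
      l.map fun q => (intNumeral n q.2).mul (monTerm q.1) := by
    rw [hl]
    simp [List.map_map, Function.comp]
  obtain ⟨g₂, hg₂p, hg₂v, h₅⟩ := d_insertList l 0
  have hP0 : polyTerm (0 : MvPolynomial (Fin n) ℤ) = zero := by
    rw [polyTerm_def]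
    simp
  have hsum : (l.map fun q => MvPolynomial.monomial q.1 q.2).sum = α * β := by
    rw [hl, List.map_map, hL, List.map_flatMap, sum_flatMap_poly]
    simp only [List.map_map, Finset.sum_map_toList]
    conv_rhs => rw [MvPolynomial.as_sum α, MvPolynomial.as_sum β]
    rw [Finset.sum_mul_sum]
    exact Finset.sum_congr rfl fun d _ => Finset.sum_congr rfl fun e _ =>
      (MvPolynomial.monomial_mul).symm
  have h₅' : DerivWcr (sumT (l.map fun q => (intNumeral n q.2).mul (monTerm q.1)))
      ((polyTerm (α * β)).add (zero.mul g₂)) := by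
    rw [hP0, _root_.zero_add, hsum] at h₅
    exact (d_zero_add _).symm.trans h₅
  have h₅'' : DerivWcr (sumT (L.map fun p =>
      (intNumeral n (α.coeff p.1 * β.coeff p.2)).mul (monTerm (p.1 + p.2))))
      ((polyTerm (α * β)).add (zero.mul g₂)) := by
    rw [hE2]
    exact h₅'
  have hmid : DerivWcr (sumT (l₁.flatMap fun a => l₂.map fun b => a.mul b))
      ((polyTerm (α * β)).add (zero.mul g₂)) := by
    rw [hE1]
    exact h₃.trans h₅''
  have htot : DerivWcr ((polyTerm α).mul (polyTerm β))
      ((polyTerm (α * β)).add (zero.mul (g₂.mul g₁))) :=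
    h₁.trans ((DerivWcr.add_congr hmid (DerivWcr.refl _)).trans
      ((DerivWcr.add_assoc _ _ _).trans (DerivWcr.add_congr (DerivWcr.refl _)
        (d_zmul_mul g₂ g₁).symm)))
  have hub : α.vars ∪ β.vars ⊆ (α * β).vars := by
    refine Finset.union_subset (vars_subset_mul hβ) ?_
    rw [_root_.mul_comm α β]
    exact vars_subset_mul hα
  have hsup : suppUnion l ⊆ α.vars ∪ β.vars := by
    refine suppUnion_subset ?_
    intro q hq
    rw [hl] at hq
    obtain ⟨p, hp, rfl⟩ := List.mem_map.1 hq
    rw [hL] at hp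
    obtain ⟨d, hd, hp2⟩ := List.mem_flatMap.1 hp
    obtain ⟨e, he, rfl⟩ := List.mem_map.1 hp2
    intro j hj
    have := Finsupp.support_add hj
    simp only [Finset.mem_union] at this ⊢
    rcases this with h | h
    · exact Or.inl ((MvPolynomial.mem_vars j).2 ⟨d, Finset.mem_toList.1 hd, h⟩)
    · exact Or.inr ((MvPolynomial.mem_vars j).2 ⟨e, Finset.mem_toList.1 he, h⟩)
  have hvars : tvars (g₂.mul g₁) ⊆ tvars (polyTerm (α * β)) := by
    rw [tvars_polyTerm]
    have ht1 : tvars (sumT l₁) = α.vars := by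
      rw [hl₁, ← polyTerm_def, tvars_polyTerm]
    have ht2 : tvars (sumT l₂) = β.vars := by
      rw [hl₂, ← polyTerm_def, tvars_polyTerm]
    intro j hj
    simp only [tvars_mul, Finset.mem_union] at hj
    rcases hj with hj | hj
    · have := hg₂v hj
      simp only [MvPolynomial.vars_0, Finset.empty_union] at this
      exact hub (hsup this)
    · have := hg₁v hj
      rw [ht1, ht2] at this
      exact hub this
  exact htot.trans (d_absorb _ _ ⟨hg₂p, hg₁p⟩ hvars)
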